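/- arXiv:1311.3364 — 4 statements merged into one kernel-verified Lean document; each statement's English description precedes it below -/
import Mathlib

section
/- Let G be a finite group and ρ a linear representation of G on a finite-dimensional real (or complex) normed vector space X. Let s(t), t = 0,1,2,..., be a sequence of vectors of convex weights on G, let E_t = ∑_{g∈G} s_g(t)·ρ(g), and let E_{t,0} = E_{t-1}∘⋯∘E_1∘E_0 denote the cumulative evolution map (with E_{0,0} = id). Fix x ∈ X and define F̄ = (1/|G|) ∑_{g∈G} ρ(g). Then the following are equivalent: (i) lim_{t→∞} ‖ρ(g)(E_{t,0}(x)) − E_{t,0}(x)‖ = 0 for every g ∈ G (asymptotic symmetrization at x); (ii) lim_{t→∞} E_{t,0}(x) = F̄(x). -/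
/-- A vector of convex weights on a finite type: nonnegative entries summing to 1. -/
def IsConvexWeights {G : Type*} [Fintype G] (s : G → ℝ) : Prop :=
  (∀ g, 0 ≤ s g) ∧ ∑ g, s g = 1

theorem symmetrization_iff_convergence_to_symmetrizing_map
    {G : Type*} [Group G] [Fintype G]
    {X : Type*} [NormedAddCommGroup X] [NormedSpace ℝ X] [FiniteDimensional ℝ X]
    (ρ : Representation ℝ G X)
    (s : ℕ → G → ℝ) (hs : ∀ t, IsConvexWeights (s t))
    (E : ℕ → X →ₗ[ℝ] X)
    (hE0 : E 0 = LinearMap.id)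
    (hE : ∀ t, E (t + 1) = (∑ g, s t g • (ρ g : X →ₗ[ℝ] X)) ∘ₗ E t)
    (x : X) :
    (∀ g : G, Filter.Tendsto (fun t => ‖ρ g (E t x) - E t x‖) Filter.atTop (nhds 0))
      ↔ Filter.Tendsto (fun t => E t x) Filter.atTop
          (nhds (((Fintype.card G : ℝ)⁻¹ • ∑ g, (ρ g : X →ₗ[ℝ] X)) x)) := by
  set F : X →ₗ[ℝ] X := (Fintype.card G : ℝ)⁻¹ • ∑ g, (ρ g : X →ₗ[ℝ] X) with hF
  have cardpos : (0:ℝ) < Fintype.card G := by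
    exact_mod_cast Fintype.card_pos
  have hFapp : ∀ y : X, F y = (Fintype.card G : ℝ)⁻¹ • ∑ g, ρ g y := by
    intro y
    simp [hF, LinearMap.sum_apply]
  -- F is left- and right-invariant
  have hFρ : ∀ (g : G) (y : X), F (ρ g y) = F y := by
    intro g y
    rw [hFapp, hFapp]
    congr 1
    exact Fintype.sum_equiv (Equiv.mulRight g) _ _ (by
      intro h
      simp [Equiv.mulRight, map_mul])
  have hρF : ∀ (g : G) (y : X), ρ g (F y) = F y := by
    intro g y
    rw [hFapp y, map_smul, map_sum]
    congr 1
    exact Fintype.sum_equiv (Equiv.mulLeft g) _ _ (by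
      intro h
      simp only [Equiv.coe_mulLeft, map_mul, Module.End.mul_apply])
  -- F (E t x) = F x for all t
  have hFE : ∀ t, F (E t x) = F x := by
    intro t
    induction t with
    | zero => simp [hE0]
    | succ t ih =>
      rw [hE t]
      simp only [LinearMap.comp_apply, LinearMap.sum_apply, LinearMap.smul_apply, map_sum,
        map_smul]
      calc ∑ g, s t g • F (ρ g (E t x)) = ∑ g, s t g • F x := by
            exact Finset.sum_congr rfl fun g _ => by rw [hFρ, ih]
        _ = (∑ g, s t g) • F x := by rw [Finset.sum_smul]
        _ = F x := by rw [(hs t).2, one_smul]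
  constructor
  · intro h
    -- E t x - F x = (1/|G|) • ∑ g, (E t x - ρ g (E t x))
    have key : ∀ t, E t x - F x =
        (Fintype.card G : ℝ)⁻¹ • ∑ g : G, (E t x - ρ g (E t x)) := by
      intro t
      rw [← hFE t, hFapp]
      rw [Finset.sum_sub_distrib, smul_sub, Finset.sum_const, Finset.card_univ,
        ← Nat.cast_smul_eq_nsmul ℝ, smul_smul, inv_mul_cancel₀ (ne_of_gt cardpos), one_smul]
    rw [tendsto_iff_norm_sub_tendsto_zero]
    have bound : ∀ t, ‖E t x - F x‖ ≤
        (Fintype.card G : ℝ)⁻¹ * ∑ g : G, ‖ρ g (E t x) - E t x‖ := by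
      intro t
      rw [key t, norm_smul]
      simp only [norm_inv, Real.norm_natCast]
      gcongr
      calc ‖∑ g : G, (E t x - ρ g (E t x))‖ ≤ ∑ g : G, ‖E t x - ρ g (E t x)‖ :=
            norm_sum_le _ _
        _ = ∑ g : G, ‖ρ g (E t x) - E t x‖ := by
            exact Finset.sum_congr rfl fun g _ => norm_sub_rev _ _
    have hlim : Filter.Tendsto
        (fun t => (Fintype.card G : ℝ)⁻¹ * ∑ g : G, ‖ρ g (E t x) - E t x‖)
        Filter.atTop (nhds 0) := by
      have : Filter.Tendsto (fun t => ∑ g : G, ‖ρ g (E t x) - E t x‖)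
          Filter.atTop (nhds 0) := by
        have := tendsto_finset_sum (Finset.univ : Finset G) (fun g _ => h g)
        simpa using this
      simpa using this.const_mul (Fintype.card G : ℝ)⁻¹
    exact squeeze_zero (fun t => norm_nonneg _) bound hlim
  · intro h g
    have hc : Continuous (ρ g : X →ₗ[ℝ] X) := LinearMap.continuous_of_finiteDimensional _
    have h1 : Filter.Tendsto (fun t => ρ g (E t x)) Filter.atTop (nhds (F x)) := by
      have := (hc.tendsto (F x)).comp h
      simpa only [Function.comp_def, hρF g x] using this
    have h2 : Filter.Tendsto (fun t => ρ g (E t x) - E t x) Filter.atTop (nhds 0) := by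
      simpa using h1.sub h
    simpa using h2.norm
end

section
/- Let G be a finite group, T a positive integer, and 0 < δ ≤ 1/|G|. Let s(t), t = 0,1,2,..., be vectors of convex weights on G and define the evolution p(t+1) = s(t) ∗ p(t) starting from an arbitrary vector of convex weights p(0), where ∗ denotes convolution. For each t let q(t,T) denote the composite convex weight vector such that the evolution from time t to t+T is convolution by q(t,T) (i.e., q(t,T) = s(t+T−1) ∗ ⋯ ∗ s(t+1) ∗ s(t)). Assume q(t,T)(g) ≥ δ for all g ∈ G and all t. Then for every integer k ≥ 0 and every g ∈ G: 1/|G| − (1/|G|)·(1 − |G|δ)^k ≤ p(kT)(g) ≤ 1/|G| + ((|G|−1)/|G|)·(1 − |G|δ)^k. -/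
/-- Group convolution of weight vectors: `(q ∗ p)(g) = ∑ h, q(h) p(h⁻¹ g)`. -/
def groupConv {G : Type*} [Group G] [Fintype G] (q p : G → ℝ) : G → ℝ :=
  fun g => ∑ h : G, q h * p (h⁻¹ * g)

/-- The composite weights describing the evolution from time `t` to `t + T`:
`compWeights s t T = s(t+T−1) ∗ ⋯ ∗ s(t+1) ∗ s(t)` (the empty composite, `T = 0`,
is the delta distribution at the identity). -/
def compWeights {G : Type*} [Group G] [Fintype G] [DecidableEq G]
    (s : ℕ → G → ℝ) (t : ℕ) : ℕ → G → ℝ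
  | 0 => fun g => if g = 1 then 1 else 0
  | T + 1 => groupConv (s (t + T)) (compWeights s t T)

section Aux

variable {G : Type*} [Group G] [Fintype G]

lemma sum_shift (p : G → ℝ) (h : G) : ∑ g, p (h⁻¹ * g) = ∑ g, p g :=
  Equiv.sum_comp (Equiv.mulLeft h⁻¹) p

lemma groupConv_convex {q p : G → ℝ} (hq : IsConvexWeights q) (hp : IsConvexWeights p) :
    IsConvexWeights (groupConv q p) := by
  constructor
  · intro g
    exact Finset.sum_nonneg fun h _ => mul_nonneg (hq.1 h) (hp.1 _)
  · have : ∑ g, groupConv q p g = ∑ h : G, q h * ∑ g, p (h⁻¹ * g) := by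
      simp only [groupConv, Finset.mul_sum]
      exact Finset.sum_comm
    rw [this]
    simp only [sum_shift, hp.2, mul_one, hq.2]

lemma sum_shift' (p : G → ℝ) (g : G) : ∑ h : G, p (h⁻¹ * g) = ∑ h, p h :=
  Equiv.sum_comp ((Equiv.inv G).trans (Equiv.mulRight g)) p

lemma groupConv_assoc (a b c : G → ℝ) :
    groupConv a (groupConv b c) = groupConv (groupConv a b) c := by
  funext g
  simp only [groupConv]
  calc ∑ h : G, a h * ∑ x : G, b x * c (x⁻¹ * (h⁻¹ * g))
      = ∑ h : G, ∑ y : G, a h * (b (h⁻¹ * y) * c (y⁻¹ * g)) := by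
        refine Finset.sum_congr rfl fun h _ => ?_
        rw [← Finset.mul_sum]
        congr 1
        rw [← Equiv.sum_comp (Equiv.mulLeft h) (fun y => b (h⁻¹ * y) * c (y⁻¹ * g))]
        refine Finset.sum_congr rfl fun x _ => ?_
        simp [mul_assoc]
    _ = ∑ y : G, ∑ h : G, a h * (b (h⁻¹ * y) * c (y⁻¹ * g)) := Finset.sum_comm
    _ = ∑ y : G, (∑ h : G, a h * b (h⁻¹ * y)) * c (y⁻¹ * g) := by
        refine Finset.sum_congr rfl fun y _ => ?_
        rw [Finset.sum_mul]
        exact Finset.sum_congr rfl fun h _ => (mul_assoc _ _ _).symm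

lemma compWeights_convex [DecidableEq G] {s : ℕ → G → ℝ} (hs : ∀ t, IsConvexWeights (s t))
    (t : ℕ) : ∀ T, IsConvexWeights (compWeights s t T)
  | 0 => by
    constructor
    · intro g; dsimp [compWeights]; positivity
    · simp [compWeights]
  | T + 1 => groupConv_convex (hs (t + T)) (compWeights_convex hs t T)

lemma step_bound {q p : G → ℝ} {δ m M : ℝ} (hp : IsConvexWeights p)
    (hqs : ∑ h, q h = 1) (hqδ : ∀ g, δ ≤ q g)
    (hm : ∀ g, m ≤ p g) (hM : ∀ g, p g ≤ M) (g : G) :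
    δ + (1 - (Fintype.card G : ℝ) * δ) * m ≤ groupConv q p g ∧
      groupConv q p g ≤ δ + (1 - (Fintype.card G : ℝ) * δ) * M := by
  have hsplit : groupConv q p g = δ + ∑ h : G, (q h - δ) * p (h⁻¹ * g) := by
    have : groupConv q p g
        = ∑ h : G, δ * p (h⁻¹ * g) + ∑ h : G, (q h - δ) * p (h⁻¹ * g) := by
      rw [← Finset.sum_add_distrib]
      refine Finset.sum_congr rfl fun h _ => ?_
      ring
    rw [this, ← Finset.mul_sum, sum_shift', hp.2, mul_one]
  have hcoef : ∑ h : G, (q h - δ) = 1 - (Fintype.card G : ℝ) * δ := by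
    rw [Finset.sum_sub_distrib, hqs, Finset.sum_const, Finset.card_univ, nsmul_eq_mul]
  constructor
  · rw [hsplit]
    have : (1 - (Fintype.card G : ℝ) * δ) * m ≤ ∑ h : G, (q h - δ) * p (h⁻¹ * g) := by
      rw [← hcoef, Finset.sum_mul]
      exact Finset.sum_le_sum fun h _ =>
        mul_le_mul_of_nonneg_left (hm _) (by linarith [hqδ h])
    linarith
  · rw [hsplit]
    have : ∑ h : G, (q h - δ) * p (h⁻¹ * g) ≤ (1 - (Fintype.card G : ℝ) * δ) * M := by
      rw [← hcoef, Finset.sum_mul]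
      exact Finset.sum_le_sum fun h _ =>
        mul_le_mul_of_nonneg_left (hM _) (by linarith [hqδ h])
    linarith

end Aux

theorem geometric_bounds_towards_uniform
    {G : Type*} [Group G] [Fintype G] [DecidableEq G]
    (T : ℕ) (hT : 0 < T)
    (δ : ℝ) (hδ0 : 0 < δ) (hδ1 : δ ≤ 1 / (Fintype.card G : ℝ))
    (s : ℕ → G → ℝ) (hs : ∀ t, IsConvexWeights (s t))
    (p : ℕ → G → ℝ) (hp0 : IsConvexWeights (p 0))
    (hstep : ∀ t, p (t + 1) = groupConv (s t) (p t))
    (hq : ∀ (t : ℕ) (g : G), δ ≤ compWeights s t T g) :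
    ∀ (k : ℕ) (g : G),
      1 / (Fintype.card G : ℝ)
          - 1 / (Fintype.card G : ℝ) * (1 - (Fintype.card G : ℝ) * δ) ^ k
        ≤ p (k * T) g
      ∧ p (k * T) g
        ≤ 1 / (Fintype.card G : ℝ)
          + ((Fintype.card G : ℝ) - 1) / (Fintype.card G : ℝ)
              * (1 - (Fintype.card G : ℝ) * δ) ^ k := by
  set n : ℝ := (Fintype.card G : ℝ) with hn
  have hnpos : 0 < n := by
    rw [hn]
    exact_mod_cast Fintype.card_pos (α := G)
  have hn0 : n ≠ 0 := ne_of_gt hnpos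
  -- all p t are convex weights
  have hpconv : ∀ t, IsConvexWeights (p t) := by
    intro t
    induction t with
    | zero => exact hp0
    | succ t ih => rw [hstep t]; exact groupConv_convex (hs t) ih
  -- evolution formula
  have hev : ∀ t, p (t + T) = groupConv (compWeights s t T) (p t) := by
    intro t
    have : ∀ T', p (t + T') = groupConv (compWeights s t T') (p t) := by
      intro T'
      induction T' with
      | zero =>
        funext g
        simp only [Nat.add_zero, compWeights, groupConv]
        rw [Finset.sum_eq_single 1]
        · simp
        · intro h _ hne; simp [hne]
        · intro h; simp at h
      | succ T' ih =>
        have : t + (T' + 1) = (t + T') + 1 := by ring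
        rw [this, hstep (t + T'), ih, groupConv_assoc]
        rfl
    exact this T
  intro k
  induction k with
  | zero =>
    intro g
    constructor
    · simp only [pow_zero, mul_one, Nat.zero_mul]
      have := hp0.1 g
      linarith
    · simp only [pow_zero, mul_one, Nat.zero_mul]
      have hle : p 0 g ≤ 1 := by
        rw [← hp0.2]
        exact Finset.single_le_sum (fun h _ => hp0.1 h) (Finset.mem_univ g)
      have : 1 / n + (n - 1) / n = 1 := by field_simp; ring
      linarith
  | succ k ih =>
    have hrw : (k + 1) * T = k * T + T := by ring
    intro g
    rw [hrw, hev (k * T)]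
    have hb := step_bound (q := compWeights s (k * T) T) (hpconv (k * T))
      (compWeights_convex hs (k * T) T).2 (hq (k * T))
      (fun g => (ih g).1) (fun g => (ih g).2) g
    have hlow : 1 / n - 1 / n * (1 - n * δ) ^ (k + 1)
        = δ + (1 - n * δ) * (1 / n - 1 / n * (1 - n * δ) ^ k) := by
      field_simp
      ring
    have hhigh : 1 / n + (n - 1) / n * (1 - n * δ) ^ (k + 1)
        = δ + (1 - n * δ) * (1 / n + (n - 1) / n * (1 - n * δ) ^ k) := by
      field_simp
      ring
    rw [hlow, hhigh]
    exact hb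
end

section
/- Let G be a finite group, let 0 < δ ≤ 1/|G|, let q be a vector of convex weights on G with q(h) ≥ δ for all h ∈ G, and let p be any vector of convex weights on G. Define p' = q ∗ p and the relative entropy to the uniform distribution K(a) = ∑_{g∈G} a(g)·log(|G|·a(g)) (with the convention 0·log 0 = 0) for any vector of convex weights a. Then K(p') ≤ K(p), and K(p') = K(p) if and only if p = p̂, the uniform vector p̂(g) = 1/|G|. In particular, the Kullback–Leibler divergence of p(t) from the uniform distribution is a strict Lyapunov function for the convolution dynamics whenever the T-step composite weights are uniformly bounded below by δ. -/
/-- Relative entropy (Kullback–Leibler divergence) of a convex-weight vector with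
respect to the uniform distribution on a finite group:
`K(a) = ∑ g, a(g) log(|G| a(g))` (note `Real.log 0 = 0`, so `0 · log 0 = 0`). -/
noncomputable def relEntUniform {G : Type*} [Fintype G] (a : G → ℝ) : ℝ :=
  ∑ g : G, a g * Real.log ((Fintype.card G : ℝ) * a g)

/-- Split off the constant `log |G|` from the relative entropy. -/
lemma relEntUniform_eq {G : Type*} [Fintype G] (a : G → ℝ) (ha : ∀ g, 0 ≤ a g) :
    relEntUniform a = (∑ g : G, a g * Real.log (a g))
      + (∑ g : G, a g) * Real.log (Fintype.card G : ℝ) := by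
  rw [Finset.sum_mul, relEntUniform, ← Finset.sum_add_distrib]
  refine Finset.sum_congr rfl fun g _ => ?_
  rcases eq_or_lt_of_le (ha g) with h | h
  · simp [← h]
  · have : Nonempty G := ⟨g⟩
    have hc : (0:ℝ) < Fintype.card G := Nat.cast_pos.mpr Fintype.card_pos
    rw [Real.log_mul hc.ne' h.ne', mul_add]; ring

theorem relative_entropy_strict_lyapunov
    {G : Type*} [Group G] [Fintype G]
    (δ : ℝ) (hδ0 : 0 < δ) (hδ1 : δ ≤ 1 / (Fintype.card G : ℝ))
    (q : G → ℝ) (hq : IsConvexWeights q) (hqδ : ∀ h : G, δ ≤ q h)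
    (p : G → ℝ) (hp : IsConvexWeights p) :
    relEntUniform (groupConv q p) ≤ relEntUniform p
    ∧ (relEntUniform (groupConv q p) = relEntUniform p
        ↔ p = fun _ => 1 / (Fintype.card G : ℝ)) := by
  classical
  set n : ℝ := (Fintype.card G : ℝ) with hn
  have hcard : (0 : ℝ) < n := Nat.cast_pos.mpr Fintype.card_pos
  have hq0 : ∀ h : G, 0 < q h := fun h => lt_of_lt_of_le hδ0 (hqδ h)
  have hp0 := hp.1
  set φ : ℝ → ℝ := fun x => x * Real.log x with hφ
  -- nonnegativity and sum of the convolution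
  have hconv0 : ∀ g, 0 ≤ groupConv q p g := fun g =>
    Finset.sum_nonneg fun h _ => mul_nonneg (hq0 h).le (hp0 _)
  have hreindex : ∀ (f : ℝ → ℝ) (h : G), ∑ g : G, f (p (h⁻¹ * g)) = ∑ g : G, f (p g) := by
    intro f h
    exact (Fintype.sum_bijective (h * ·) (Group.mulLeft_bijective h) (fun g => f (p g))
      (fun g => f (p (h⁻¹ * g))) (fun x => by simp)).symm
  have hconvsum : ∑ g, groupConv q p g = 1 := by
    simp only [groupConv]
    rw [Finset.sum_comm]
    have : ∀ h : G, ∑ g : G, q h * p (h⁻¹ * g) = q h := by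
      intro h
      rw [← Finset.mul_sum, hreindex (fun x => x) h, hp.2, mul_one]
    simp only [this, hq.2]
  -- pointwise Jensen
  have hjensen : ∀ g : G, φ (groupConv q p g) ≤ ∑ h : G, q h * φ (p (h⁻¹ * g)) := by
    intro g
    have := Real.convexOn_mul_log.map_sum_le (t := Finset.univ)
      (w := q) (p := fun h => p (h⁻¹ * g)) (fun i _ => (hq0 i).le) hq.2
      (fun i _ => hp0 _)
    simpa [groupConv, smul_eq_mul] using this
  have hsum_eq : ∑ g : G, ∑ h : G, q h * φ (p (h⁻¹ * g)) = ∑ g : G, φ (p g) := by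
    rw [Finset.sum_comm]
    have : ∀ h : G, ∑ g : G, q h * φ (p (h⁻¹ * g)) = q h * ∑ g : G, φ (p g) := by
      intro h
      rw [← Finset.mul_sum, hreindex φ h]
    simp only [this, ← Finset.sum_mul, hq.2, one_mul]
  have hKconv : relEntUniform (groupConv q p)
      = (∑ g : G, φ (groupConv q p g)) + Real.log n := by
    rw [relEntUniform_eq _ hconv0, hconvsum, one_mul]
  have hKp : relEntUniform p = (∑ g : G, φ (p g)) + Real.log n := by
    rw [relEntUniform_eq _ hp0, hp.2, one_mul]
  have hle : ∑ g : G, φ (groupConv q p g) ≤ ∑ g : G, φ (p g) := by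
    rw [← hsum_eq]
    exact Finset.sum_le_sum fun g _ => hjensen g
  refine ⟨by rw [hKconv, hKp]; linarith, ?_, ?_⟩
  · -- equality implies uniform
    intro heq
    have heq' : ∑ g : G, φ (groupConv q p g) = ∑ g : G, ∑ h : G, q h * φ (p (h⁻¹ * g)) := by
      rw [hsum_eq]
      rw [hKconv, hKp] at heq
      linarith
    have hpt : ∀ g : G, φ (groupConv q p g) = ∑ h : G, q h * φ (p (h⁻¹ * g)) := by
      have := (Finset.sum_eq_sum_iff_of_le (fun g _ => hjensen g)).mp heq'
      exact fun g => this g (Finset.mem_univ g)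
    -- apply the equality case of Jensen at g = 1
    have hj := (Real.strictConvexOn_mul_log.map_sum_eq_iff (t := Finset.univ)
      (w := q) (p := fun h => p (h⁻¹ * 1)) (fun i _ => hq0 i) hq.2
      (fun i _ => hp0 _)).mp ?_
    · -- all p values equal to the convolution value at 1
      have hall : ∀ x : G, p x = groupConv q p 1 := by
        intro x
        have := hj (1 * x⁻¹) (Finset.mem_univ _)
        simpa [groupConv, smul_eq_mul, mul_assoc] using this
      have hc : (Fintype.card G : ℝ) * groupConv q p 1 = 1 := by
        rw [← hp.2]
        simp [hall, mul_comm]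
      funext x
      rw [hall x, eq_div_iff hcard.ne', mul_comm, hc]
    · have := hpt 1
      simpa [groupConv, smul_eq_mul] using this
  · -- uniform implies equality
    intro hpun
    have : groupConv q p = fun _ => 1 / n := by
      funext g
      simp only [groupConv, hpun]
      rw [← Finset.sum_mul, hq.2, one_mul]
    rw [this, hpun]
end

section
/- Consider m agents with states x_k(t) ∈ ℝⁿ, k = 1,...,m. Let (j(t), k(t)), t = 0,1,2,..., be a sequence of pairs of distinct indices in {1,...,m} and let α(t) ∈ [α̲, ᾱ] with 0 < α̲ ≤ ᾱ < 1. Define the gossip update: x_{j(t)}(t+1) = x_{j(t)}(t) + α(t)(x_{k(t)}(t) − x_{j(t)}(t)), x_{k(t)}(t+1) = x_{k(t)}(t) + α(t)(x_{j(t)}(t) − x_{k(t)}(t)), and x_ℓ(t+1) = x_ℓ(t) for all other ℓ. Suppose there exists B > 0 such that for every t, the graph on vertex set {1,...,m} whose edge set is {(j(s), k(s)) : t ≤ s ≤ t+B} is connected. Then for every k, lim_{t→∞} x_k(t) = x̄(0), where x̄(0) = (1/m) ∑_{j=1}^m x_j(0) is the average of the initial states. -/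
lemma gossip_step_energy {E : Type*} [NormedAddCommGroup E] [InnerProductSpace ℝ E]
    (u v : E) (α : ℝ) :
    ‖u + α • (v - u)‖^2 + ‖v + α • (u - v)‖^2
      = ‖u‖^2 + ‖v‖^2 - 2*α*(1-α)*‖u - v‖^2 := by
  simp only [← real_inner_self_eq_norm_sq]
  simp only [inner_add_left, inner_add_right, inner_sub_left, inner_sub_right,
    real_inner_smul_left, real_inner_smul_right]
  rw [real_inner_comm v u]
  ring

set_option maxHeartbeats 2000000 in
theorem gossip_converges_to_average
    (m n : ℕ)
    (x : ℕ → Fin m → EuclideanSpace ℝ (Fin n))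
    (j k : ℕ → Fin m) (hjk : ∀ t, j t ≠ k t)
    (α : ℕ → ℝ) (a b : ℝ) (ha : 0 < a) (hab : a ≤ b) (hb : b < 1)
    (hα : ∀ t, α t ∈ Set.Icc a b)
    (hupdatej : ∀ t, x (t + 1) (j t) = x t (j t) + α t • (x t (k t) - x t (j t)))
    (hupdatek : ∀ t, x (t + 1) (k t) = x t (k t) + α t • (x t (j t) - x t (k t)))
    (hfix : ∀ t, ∀ ℓ : Fin m, ℓ ≠ j t → ℓ ≠ k t → x (t + 1) ℓ = x t ℓ)
    (B : ℕ) (hB : 0 < B)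
    (hconn : ∀ t : ℕ,
      (SimpleGraph.fromRel
        (fun u v => ∃ s : ℕ, t ≤ s ∧ s ≤ t + B ∧ j s = u ∧ k s = v)).Connected) :
    ∀ i : Fin m,
      Filter.Tendsto (fun t => x t i) Filter.atTop
        (nhds ((m : ℝ)⁻¹ • ∑ l : Fin m, x 0 l)) := by
  intro i
  have hm : 0 < m := Fin.pos i
  have hm1 : (1:ℝ) ≤ (m:ℝ) := by exact_mod_cast hm
  set c : EuclideanSpace ℝ (Fin n) := (m : ℝ)⁻¹ • ∑ l : Fin m, x 0 l with hc
  set V : ℕ → ℝ := fun t => ∑ l : Fin m, ‖x t l - c‖^2 with hV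
  -- basic facts about α
  have hα0 : ∀ t, 0 < α t := fun t => lt_of_lt_of_le ha (hα t).1
  have hα1 : ∀ t, α t < 1 := fun t => lt_of_le_of_lt (hα t).2 hb
  -- energy step identity
  have hVstep : ∀ t, V (t+1) = V t - 2*(α t)*(1-α t)*‖x t (j t) - x t (k t)‖^2 := by
    intro t
    have hsplit : V (t+1) - V t
        = (‖x (t+1) (j t) - c‖^2 - ‖x t (j t) - c‖^2)
          + (‖x (t+1) (k t) - c‖^2 - ‖x t (k t) - c‖^2) := by
      rw [hV]
      rw [← Finset.sum_sub_distrib]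
      refine Finset.sum_eq_add (j t) (k t) (hjk t) ?_ ?_ ?_
      · intro l _ hl
        rw [hfix t l hl.1 hl.2]; ring
      · intro h; exact absurd (Finset.mem_univ _) h
      · intro h; exact absurd (Finset.mem_univ _) h
    have hj' : x (t+1) (j t) - c
        = (x t (j t) - c) + α t • ((x t (k t) - c) - (x t (j t) - c)) := by
      rw [hupdatej t]; module
    have hk' : x (t+1) (k t) - c
        = (x t (k t) - c) + α t • ((x t (j t) - c) - (x t (k t) - c)) := by
      rw [hupdatek t]; module
    have hkey := gossip_step_energy (x t (j t) - c) (x t (k t) - c) (α t)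
    have hdiff : (x t (j t) - c) - (x t (k t) - c) = x t (j t) - x t (k t) := by abel
    have hdn : ‖x t (j t) - c - (x t (k t) - c)‖ = ‖x t (j t) - x t (k t)‖ := by rw [hdiff]
    rw [hdn] at hkey
    rw [hj', hk'] at hsplit
    linarith
  -- monotonicity
  have hVdec : ∀ t, V (t+1) ≤ V t := by
    intro t
    have h1 : 0 ≤ 2*(α t)*(1-α t)*‖x t (j t) - x t (k t)‖^2 := by
      have h2 := hα0 t; have h3 := hα1 t
      have h4 : (0:ℝ) ≤ 1 - α t := by linarith
      have := mul_nonneg (mul_nonneg (mul_nonneg (by norm_num : (0:ℝ) ≤ 2) h2.le) h4)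
        (sq_nonneg ‖x t (j t) - x t (k t)‖)
      linarith [this]
    rw [hVstep t]; linarith
  have hVmono : ∀ s t, s ≤ t → V t ≤ V s := by
    intro s t h
    induction t with
    | zero => simp_all
    | succ t ih =>
      rcases Nat.lt_or_ge s (t+1) with h' | h'
      · exact le_trans (hVdec t) (ih (Nat.lt_succ_iff.mp h'))
      · have : s = t + 1 := le_antisymm h h'
        subst this; rfl
  have hVnonneg : ∀ t, 0 ≤ V t := by
    intro t; rw [hV]
    exact Finset.sum_nonneg fun l _ => sq_nonneg _
  -- average conservation
  have hsum : ∀ t, ∑ l : Fin m, x t l = ∑ l : Fin m, x 0 l := by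
    intro t
    induction t with
    | zero => rfl
    | succ t ih =>
      rw [← ih]
      have : ∑ l : Fin m, (x (t+1) l - x t l) = 0 := by
        rw [Finset.sum_eq_add (j t) (k t) (hjk t)
          (fun l _ hl => by rw [hfix t l hl.1 hl.2]; abel)
          (fun h => absurd (Finset.mem_univ _) h)
          (fun h => absurd (Finset.mem_univ _) h)]
        rw [hupdatej t, hupdatek t]
        module
      rw [Finset.sum_sub_distrib, sub_eq_zero] at this
      exact this
  have hcavg : ∀ t, c = (m:ℝ)⁻¹ • ∑ l : Fin m, x t l := fun t => by rw [hc, hsum t]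
  have h2ab : (0:ℝ) < 2*a*(1-b) := by nlinarith
  obtain ⟨θ, hθ⟩ : ∃ θ : ℝ, θ = (m:ℝ)^3*(2*(B:ℝ)+1)^2/(2*a*(1-b)) := ⟨_, rfl⟩
  have hB1 : (1:ℝ) ≤ (B:ℝ) := by exact_mod_cast hB
  have hθ1 : 1 ≤ θ := by
    rw [hθ, le_div_iff₀ h2ab]
    have h1 : (1:ℝ) ≤ (m:ℝ)^3 := one_le_pow₀ hm1
    have h2 : (9:ℝ) ≤ (2*(B:ℝ)+1)^2 := by nlinarith [hB1]
    have h3 : a*(1-b) ≤ a*1 := mul_le_mul_of_nonneg_left (by linarith) ha.le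
    nlinarith [h1, h2, h3, sq_nonneg (2*(B:ℝ)+1)]
  have hθpos : (0:ℝ) < θ := by linarith
  -- main contraction over a window
  have hcontr : ∀ t, V (t + (B+1)) ≤ (1 - 1/θ) * V t := by
    intro t
    set G : ℝ := Real.sqrt ((V t - V (t+(B+1))) / (2*a*(1-b))) with hGdef
    have hGnn : 0 ≤ G := Real.sqrt_nonneg _
    have hVt' : V (t+(B+1)) ≤ V t := hVmono t _ (Nat.le_add_right _ _)
    have hfrac : 0 ≤ (V t - V (t+(B+1))) / (2*a*(1-b)) :=
      div_nonneg (by linarith) h2ab.le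
    have hGsq : G^2 = (V t - V (t+(B+1)))/(2*a*(1-b)) := Real.sq_sqrt hfrac
    -- gap bound
    have hgap : ∀ s, t ≤ s → s ≤ t + B → ‖x s (j s) - x s (k s)‖ ≤ G := by
      intro s hs1 hs2
      have hq : a*(1-b) ≤ α s * (1 - α s) :=
        mul_le_mul (hα s).1 (by linarith [(hα s).2]) (by linarith) (hα0 s).le
      have h5 : 2*a*(1-b)*‖x s (j s) - x s (k s)‖^2 ≤ V s - V (s+1) := by
        rw [hVstep s]
        nlinarith [hq, sq_nonneg ‖x s (j s) - x s (k s)‖]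
      have h6 : V s - V (s+1) ≤ V t - V (t+(B+1)) := by
        have := hVmono t s hs1
        have := hVmono (s+1) (t+(B+1)) (by omega)
        linarith
      rw [hGdef, Real.le_sqrt (norm_nonneg _) hfrac, le_div_iff₀ h2ab]
      nlinarith [h5, h6]
    -- per-step movement
    have hstepmove : ∀ s (l : Fin m), ‖x (s+1) l - x s l‖ ≤ ‖x s (j s) - x s (k s)‖ := by
      intro s l
      by_cases hlj : l = j s
      · subst hlj
        rw [hupdatej s, add_sub_cancel_left, norm_smul, Real.norm_eq_abs,
          abs_of_pos (hα0 s), norm_sub_rev]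
        nlinarith [norm_nonneg (x s (j s) - x s (k s)), hα0 s, hα1 s]
      by_cases hlk : l = k s
      · subst hlk
        rw [hupdatek s, add_sub_cancel_left, norm_smul, Real.norm_eq_abs,
          abs_of_pos (hα0 s)]
        nlinarith [norm_nonneg (x s (j s) - x s (k s)), hα0 s, hα1 s]
      · rw [hfix s l hlj hlk]
        simp
    -- cumulative movement
    have hmove : ∀ d, d ≤ B+1 → ∀ l : Fin m, ‖x (t+d) l - x t l‖ ≤ d * G := by
      intro d
      induction d with
      | zero => intro _ l; simp
      | succ d ih =>
        intro hd l
        have h7 : ‖x (t+d+1) l - x (t+d) l‖ ≤ G :=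
          le_trans (hstepmove (t+d) l) (hgap (t+d) (by omega) (by omega))
        have h8 := ih (by omega) l
        calc ‖x (t+(d+1)) l - x t l‖
            ≤ ‖x (t+(d+1)) l - x (t+d) l‖ + ‖x (t+d) l - x t l‖ :=
              norm_sub_le_norm_sub_add_norm_sub _ _ _
          _ ≤ G + d * G := add_le_add h7 h8
          _ = ((d:ℝ)+1) * G := by ring
          _ = ((d+1 : ℕ) : ℝ) * G := by push_cast; ring
    -- bound for one directed edge
    have hpair : ∀ s, t ≤ s → s ≤ t + B → ∀ p q : Fin m, j s = p → k s = q →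
        ‖x t p - x t q‖ ≤ (2*(B:ℝ)+1) * G := by
      intro s hs1 hs2 p q hp hq
      obtain ⟨d, rfl⟩ := Nat.exists_eq_add_of_le hs1
      have hdB : d ≤ B := by omega
      have h1 : ‖x t p - x (t+d) p‖ ≤ (B:ℝ) * G := by
        rw [norm_sub_rev]
        refine le_trans (hmove d (by omega) p) ?_
        have : (d:ℝ) ≤ (B:ℝ) := by exact_mod_cast hdB
        nlinarith [hGnn]
      have h2 : ‖x (t+d) q - x t q‖ ≤ (B:ℝ) * G := by
        refine le_trans (hmove d (by omega) q) ?_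
        have : (d:ℝ) ≤ (B:ℝ) := by exact_mod_cast hdB
        nlinarith [hGnn]
      have h3 : ‖x (t+d) p - x (t+d) q‖ ≤ G := by
        rw [← hp, ← hq]; exact hgap (t+d) hs1 hs2
      calc ‖x t p - x t q‖
          ≤ ‖x t p - x (t+d) p‖ + ‖x (t+d) p - x t q‖ :=
            norm_sub_le_norm_sub_add_norm_sub _ _ _
        _ ≤ ‖x t p - x (t+d) p‖ + (‖x (t+d) p - x (t+d) q‖ + ‖x (t+d) q - x t q‖) := by
            linarith [norm_sub_le_norm_sub_add_norm_sub (x (t+d) p) (x (t+d) q) (x t q)]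
        _ ≤ (B:ℝ)*G + (G + (B:ℝ)*G) := by linarith
        _ = (2*(B:ℝ)+1) * G := by ring
    -- adjacency bound
    have hadj : ∀ p q : Fin m,
        (SimpleGraph.fromRel
          (fun u v => ∃ s : ℕ, t ≤ s ∧ s ≤ t + B ∧ j s = u ∧ k s = v)).Adj p q →
        ‖x t p - x t q‖ ≤ (2*(B:ℝ)+1) * G := by
      intro p q hpq
      rw [SimpleGraph.fromRel_adj] at hpq
      rcases hpq.2 with ⟨s, hs1, hs2, hsp, hsq⟩ | ⟨s, hs1, hs2, hsp, hsq⟩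
      · exact hpair s hs1 hs2 p q hsp hsq
      · rw [norm_sub_rev]; exact hpair s hs1 hs2 q p hsp hsq
    -- walk bound
    have hwalk : ∀ p q : Fin m,
        ∀ w : (SimpleGraph.fromRel
          (fun u v => ∃ s : ℕ, t ≤ s ∧ s ≤ t + B ∧ j s = u ∧ k s = v)).Walk p q,
        ‖x t p - x t q‖ ≤ (w.length : ℝ) * ((2*(B:ℝ)+1) * G) := by
      intro p q w
      induction w with
      | nil => simp
      | @cons u v w' hadj' p' ih =>
        calc ‖x t u - x t w'‖
            ≤ ‖x t u - x t v‖ + ‖x t v - x t w'‖ :=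
              norm_sub_le_norm_sub_add_norm_sub _ _ _
          _ ≤ (2*(B:ℝ)+1)*G + (p'.length : ℝ) * ((2*(B:ℝ)+1)*G) :=
              add_le_add (hadj u v hadj') ih
          _ = (((p'.length + 1 : ℕ)) : ℝ) * ((2*(B:ℝ)+1)*G) := by push_cast; ring
          _ = (((SimpleGraph.Walk.cons hadj' p').length : ℕ) : ℝ) * ((2*(B:ℝ)+1)*G) := by
              rw [SimpleGraph.Walk.length_cons]
    -- all-pairs bound
    have hpq : ∀ p q : Fin m, ‖x t p - x t q‖ ≤ (m:ℝ) * ((2*(B:ℝ)+1) * G) := by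
      intro p q
      obtain ⟨w⟩ := (hconn t).preconnected p q
      classical
      have hlen : (w.toPath.1.length : ℝ) ≤ (m:ℝ) := by
        have := w.toPath.2.length_lt
        rw [Fintype.card_fin] at this
        exact_mod_cast this.le
      refine le_trans (hwalk p q w.toPath.1) ?_
      have hCnn : 0 ≤ (2*(B:ℝ)+1) * G := by positivity
      exact mul_le_mul_of_nonneg_right hlen hCnn
    -- deviation from average
    have hdev : ∀ l : Fin m, ‖x t l - c‖ ≤ (m:ℝ) * ((2*(B:ℝ)+1) * G) := by
      intro l
      have hrepr : x t l - c = (m:ℝ)⁻¹ • ∑ i' : Fin m, (x t l - x t i') := by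
        rw [hcavg t, Finset.sum_sub_distrib, smul_sub, Finset.sum_const,
          Finset.card_univ, Fintype.card_fin, ← Nat.cast_smul_eq_nsmul ℝ, smul_smul,
          inv_mul_cancel₀ (by positivity : (m:ℝ) ≠ 0), one_smul]
      rw [hrepr, norm_smul, Real.norm_eq_abs, abs_of_pos (by positivity : (0:ℝ) < (m:ℝ)⁻¹)]
      have hsle : ‖∑ i' : Fin m, (x t l - x t i')‖ ≤ (m:ℝ) * ((m:ℝ) * ((2*(B:ℝ)+1)*G)) := by
        refine le_trans (norm_sum_le _ _) ?_
        have := Finset.sum_le_card_nsmul Finset.univ (fun i' => ‖x t l - x t i'‖)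
          ((m:ℝ) * ((2*(B:ℝ)+1)*G)) (fun i' _ => hpq l i')
        simpa [Finset.card_univ, nsmul_eq_mul] using this
      calc (m:ℝ)⁻¹ * ‖∑ i' : Fin m, (x t l - x t i')‖
          ≤ (m:ℝ)⁻¹ * ((m:ℝ) * ((m:ℝ) * ((2*(B:ℝ)+1)*G))) := by
            exact mul_le_mul_of_nonneg_left hsle (by positivity)
        _ = (m:ℝ) * ((2*(B:ℝ)+1)*G) := by
            field_simp
    -- V t bound
    have hVtb : V t ≤ (m:ℝ) * ((m:ℝ) * ((2*(B:ℝ)+1) * G))^2 := by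
      rw [hV]
      have := Finset.sum_le_card_nsmul Finset.univ (fun l => ‖x t l - c‖^2)
        (((m:ℝ) * ((2*(B:ℝ)+1) * G))^2)
        (fun l _ => pow_le_pow_left₀ (norm_nonneg _) (hdev l) 2)
      simpa [Finset.card_univ, nsmul_eq_mul] using this
    have hVθ : V t ≤ θ * (V t - V (t+(B+1))) := by
      have h := hVtb
      rw [show (m:ℝ) * ((m:ℝ) * ((2*(B:ℝ)+1) * G))^2
          = (m:ℝ)^3 * (2*(B:ℝ)+1)^2 * G^2 from by ring, hGsq] at h
      calc V t ≤ (m:ℝ)^3 * (2*(B:ℝ)+1)^2 * ((V t - V (t+(B+1)))/(2*a*(1-b))) := h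
        _ = θ * (V t - V (t+(B+1))) := by rw [hθ]; ring
    have h9 : V (t+(B+1)) ≤ ((θ-1) * V t)/θ :=
      (le_div_iff₀ hθpos).mpr (by nlinarith [hVθ])
    calc V (t+(B+1)) ≤ ((θ-1) * V t)/θ := h9
      _ = (1 - 1/θ) * V t := by
        have hθ0 : θ ≠ 0 := ne_of_gt hθpos
        field_simp
  obtain ⟨r, hr⟩ : ∃ r : ℝ, r = 1 - 1/θ := ⟨_, rfl⟩
  have hr0 : 0 ≤ r := by
    have h : 1/θ ≤ 1 := by rw [div_le_one hθpos]; exact hθ1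
    rw [hr]; linarith
  have hr1 : r < 1 := by
    have h : 0 < 1/θ := by positivity
    rw [hr]; linarith
  have hgeo : ∀ q : ℕ, V ((B+1)*q) ≤ r^q * V 0 := by
    intro q
    induction q with
    | zero => simp
    | succ q ih =>
      have h1 : V ((B+1)*(q+1)) ≤ r * V ((B+1)*q) := by
        have := hcontr ((B+1)*q)
        have he : (B+1)*q + (B+1) = (B+1)*(q+1) := by ring
        rw [he] at this
        rw [hr]
        exact this
      calc V ((B+1)*(q+1)) ≤ r * V ((B+1)*q) := h1
        _ ≤ r * (r^q * V 0) := mul_le_mul_of_nonneg_left ih hr0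
        _ = r^(q+1) * V 0 := by ring
  have hbound : ∀ t, V t ≤ r^(t/(B+1)) * V 0 := by
    intro t
    have h1 : (B+1)*(t/(B+1)) ≤ t := by
      rw [Nat.mul_comm]; exact Nat.div_mul_le_self t (B+1)
    exact le_trans (hVmono _ _ h1) (hgeo _)
  have h10 : Filter.Tendsto (fun q : ℕ => r^q * V 0) Filter.atTop (nhds 0) := by
    simpa using (tendsto_pow_atTop_nhds_zero_of_lt_one hr0 hr1).mul_const (V 0)
  have h11 : Filter.Tendsto (fun t : ℕ => t/(B+1)) Filter.atTop Filter.atTop := by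
    rw [Filter.tendsto_atTop_atTop]
    intro N
    refine ⟨(B+1)*N, fun t ht => ?_⟩
    rw [Nat.le_div_iff_mul_le (by omega)]
    calc N * (B+1) = (B+1)*N := by ring
      _ ≤ t := ht
  have hVlim : Filter.Tendsto V Filter.atTop (nhds 0) :=
    squeeze_zero hVnonneg hbound (h10.comp h11)
  have hterm : ∀ t, ‖x t i - c‖^2 ≤ V t := by
    intro t
    simp only [hV]
    exact Finset.single_le_sum (f := fun l => ‖x t l - c‖^2) (fun l _ => sq_nonneg _) (Finset.mem_univ i)
  have h12 : Filter.Tendsto (fun t => ‖x t i - c‖^2) Filter.atTop (nhds 0) :=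
    squeeze_zero (fun t => sq_nonneg _) hterm hVlim
  have h13 : Filter.Tendsto (fun t => ‖x t i - c‖) Filter.atTop (nhds 0) := by
    have := (Real.continuous_sqrt.tendsto 0).comp h12
    simpa [Function.comp_def, Real.sqrt_sq, Real.sqrt_zero] using this
  exact tendsto_iff_norm_sub_tendsto_zero.mpr h13
end
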